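/- Rec unfold: let Rec X. R := ∀X.((R ⊆ X) ⇒ X). If X occurs only positively in R (X ∈⁺ R), then ⟦Rec X. R⟧_γ ⊆ ⟦[Rec X. R / X]R⟧_γ; combined with the fold direction ⟦[Rec X. R / X]R⟧_γ ⊆ ⟦Rec X. R⟧_γ, the recursive type equals its unfolding: ⟦Rec X. R⟧_γ = ⟦[Rec X. R / X]R⟧_γ. -/

import Mathlib

namespace RelTT

/-- Untyped lambda terms (de Bruijn indices). -/
inductive Term : Type
  | var : ℕ → Term
  | lam : Term → Term
  | app : Term → Term → Term

namespace Term

/-- Lift free variables ≥ c by one. -/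
def lift : Term → ℕ → Term
  | var k, c => if k < c then var k else var (k+1)
  | lam t, c => lam (lift t (c+1))
  | app t u, c => app (lift t c) (lift u c)

/-- Capture-avoiding substitution of `s` for variable `n`. -/
def subst : Term → ℕ → Term → Term
  | var k, n, s => if k = n then s else if n < k then var (k-1) else var k
  | lam t, n, s => lam (subst t (n+1) (lift s 0))
  | app t u, n, s => app (subst t n s) (subst u n s)

end Term

/-- βη-equivalence of untyped lambda terms. -/
inductive Beq : Term → Term → Prop
  | beta (t u : Term) : Beq (Term.app (Term.lam t) u) (Term.subst t 0 u)
  | eta (t : Term) : Beq (Term.lam (Term.app (Term.lift t 0) (Term.var 0))) t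
  | refl (t : Term) : Beq t t
  | symm {t u} : Beq t u → Beq u t
  | trans {t u v} : Beq t u → Beq u v → Beq t v
  | appCongr {t t' u u'} : Beq t t' → Beq u u' → Beq (Term.app t u) (Term.app t' u')
  | lamCongr {t t'} : Beq t t' → Beq (Term.lam t) (Term.lam t')

/-- Binary relations on terms. -/
abbrev Rel := Term → Term → Prop

/-- A relation is βη-closed iff it respects βη-equivalence on both sides. -/
def BetaEtaClosed (r : Rel) : Prop :=
  ∀ t₁ t₂ t₁' t₂', r t₁ t₂ → Beq t₁' t₁ → Beq t₂' t₂ → r t₁' t₂'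

/-- Relational types of RelTT (type variables are de Bruijn indices). -/
inductive Ty : Type
  | var : ℕ → Ty
  | arrow : Ty → Ty → Ty
  | all : Ty → Ty
  | conv : Ty → Ty
  | comp : Ty → Ty → Ty
  | prom : Term → Ty

/-- Environments map type variables to relations. -/
abbrev Env := ℕ → Rel

def Env.cons (r : Rel) (γ : Env) : Env
  | 0 => r
  | n+1 => γ n

/-- The relational semantics of types. -/
def interp : Ty → Env → Rel
  | Ty.var n, γ => γ n
  | Ty.arrow R R', γ => fun t t' =>
      ∀ a a', interp R γ a a' → interp R' γ (Term.app t a) (Term.app t' a')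
  | Ty.all R, γ => fun t t' =>
      ∀ r : Rel, BetaEtaClosed r → interp R (Env.cons r γ) t t'
  | Ty.conv R, γ => fun t t' => interp R γ t' t
  | Ty.comp R R', γ => fun t t' => ∃ u, interp R γ t u ∧ interp R' γ u t'
  | Ty.prom tm, γ => fun t t' => Beq (Term.app tm t) t'

/-- All relations in the environment are βη-closed. -/
def EnvClosed (γ : Env) : Prop := ∀ n, BetaEtaClosed (γ n)

def I : Term := Term.lam (Term.var 0)
def K : Term := Term.lam (Term.lam (Term.var 1))

/-- Lift type variables ≥ c by one. -/
def liftTy : Ty → ℕ → Ty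
  | Ty.var k, c => if k < c then Ty.var k else Ty.var (k+1)
  | Ty.arrow R R', c => Ty.arrow (liftTy R c) (liftTy R' c)
  | Ty.all R, c => Ty.all (liftTy R (c+1))
  | Ty.conv R, c => Ty.conv (liftTy R c)
  | Ty.comp R R', c => Ty.comp (liftTy R c) (liftTy R' c)
  | Ty.prom t, _ => Ty.prom t

/-- Capture-avoiding substitution of type S for type variable n. -/
def substTy : Ty → ℕ → Ty → Ty
  | Ty.var k, n, S => if k = n then S else if n < k then Ty.var (k-1) else Ty.var k
  | Ty.arrow R R', n, S => Ty.arrow (substTy R n S) (substTy R' n S)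
  | Ty.all R, n, S => Ty.all (substTy R (n+1) (liftTy S 0))
  | Ty.conv R, n, S => Ty.conv (substTy R n S)
  | Ty.comp R R', n, S => Ty.comp (substTy R n S) (substTy R' n S)
  | Ty.prom t, _, _ => Ty.prom t

/-- Internalized subset type: R ⊆ R' := (K I)·(R → R')·(K I)^∪. -/
def Ty.sub (R R' : Ty) : Ty :=
  Ty.comp (Ty.prom (Term.app K I)) (Ty.comp (Ty.arrow R R') (Ty.conv (Ty.prom (Term.app K I))))

/-- Implicit product: R ⇒ R' := K·(R → R')·K^∪. -/
def Ty.imp (R R' : Ty) : Ty :=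
  Ty.comp (Ty.prom K) (Ty.comp (Ty.arrow R R') (Ty.conv (Ty.prom K)))

/-- Polarities. -/
inductive Pol | pos | neg

/-- The opposite polarity. -/
def Pol.flip : Pol → Pol
  | .pos => .neg
  | .neg => .pos

/-- X ∈ᵖ R : type variable n occurs only with polarity p in R. -/
inductive OccPol : Pol → ℕ → Ty → Prop
  | varEq (n) : OccPol .pos n (Ty.var n)
  | varNe (p n m) : m ≠ n → OccPol p n (Ty.var m)
  | arrow {p n R R'} : OccPol p.flip n R → OccPol p n R' → OccPol p n (Ty.arrow R R')
  | all {p n R} : OccPol p (n+1) R → OccPol p n (Ty.all R)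
  | conv {p n R} : OccPol p n R → OccPol p n (Ty.conv R)
  | comp {p n R R'} : OccPol p n R → OccPol p n R' → OccPol p n (Ty.comp R R')
  | prom (p n t) : OccPol p n (Ty.prom t)

/-- Positive-recursive type: Rec X. R := ∀X.((R ⊆ X) ⇒ X). -/
def recTy (R : Ty) : Ty := Ty.all (Ty.imp (Ty.sub R (Ty.var 0)) (Ty.var 0))

/-- Insert a relation at position n in an environment. -/
def insertEnv (n : ℕ) (r : Rel) (γ : Env) : Env :=
  fun k => if k < n then γ k else if k = n then r else γ (k-1)

lemma insertEnv_lt {n k : ℕ} (h : k < n) (r : Rel) (γ : Env) : insertEnv n r γ k = γ k := by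
  simp [insertEnv, h]

lemma insertEnv_self (n : ℕ) (r : Rel) (γ : Env) : insertEnv n r γ n = r := by
  simp [insertEnv]

lemma insertEnv_gt {n k : ℕ} (h : n < k) (r : Rel) (γ : Env) : insertEnv n r γ k = γ (k-1) := by
  have h1 : ¬ k < n := by omega
  have h2 : k ≠ n := by omega
  simp [insertEnv, h1, h2]

lemma insertEnv_zero (r : Rel) (γ : Env) : insertEnv 0 r γ = Env.cons r γ := by
  funext k; cases k with
  | zero => simp [insertEnv, Env.cons]
  | succ m => simp [insertEnv, Env.cons]

lemma cons_insertEnv (s r : Rel) (n : ℕ) (γ : Env) :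
    Env.cons s (insertEnv n r γ) = insertEnv (n+1) r (Env.cons s γ) := by
  funext k; cases k with
  | zero => simp [insertEnv, Env.cons]
  | succ m =>
    by_cases h1 : m < n
    · simp [insertEnv, Env.cons, h1, Nat.succ_lt_succ h1]
    · by_cases h2 : m = n
      · subst h2; simp [insertEnv, Env.cons]
      · have h3 : ¬ m+1 < n+1 := by omega
        have h4 : m+1 ≠ n+1 := by omega
        simp only [Env.cons, insertEnv, if_neg h1, if_neg h2, if_neg h3, if_neg h4]
        have h6 : m+1-1 = m := by omega
        rw [h6]
        cases m with
        | zero => omega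
        | succ l => simp [Env.cons]

lemma interp_lift (R : Ty) : ∀ (c : ℕ) (r : Rel) (γ : Env),
    interp (liftTy R c) (insertEnv c r γ) = interp R γ := by
  induction R with
  | var k =>
    intro c r γ
    by_cases h : k < c
    · simp [liftTy, h, interp, insertEnv_lt h]
    · have h2 : c < k + 1 := by omega
      simp [liftTy, h, interp, insertEnv_gt h2]
  | arrow R R' ih ih' =>
    intro c r γ
    simp only [liftTy, interp, ih, ih']
  | all R ih =>
    intro c r γ
    simp only [liftTy, interp]
    funext t t'
    apply propext
    have key : ∀ s : Rel, interp (liftTy R (c+1)) (Env.cons s (insertEnv c r γ))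
        = interp R (Env.cons s γ) := by
      intro s
      rw [cons_insertEnv, ih]
    constructor <;> intro h s hs <;> have := h s hs
    · rwa [key] at this
    · rwa [key]
  | conv R ih =>
    intro c r γ
    simp only [liftTy, interp, ih]
  | comp R R' ih ih' =>
    intro c r γ
    simp only [liftTy, interp, ih, ih']
  | prom t =>
    intro c r γ
    simp only [liftTy, interp]

lemma interp_subst (R : Ty) : ∀ (n : ℕ) (S : Ty) (γ : Env),
    interp (substTy R n S) γ = interp R (insertEnv n (interp S γ) γ) := by
  induction R with
  | var k =>
    intro n S γ
    by_cases h : k = n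
    · subst h; simp [substTy, interp, insertEnv_self]
    · by_cases h2 : n < k
      · simp [substTy, h, h2, interp, insertEnv_gt h2]
      · have h3 : k < n := by omega
        simp [substTy, h, h2, interp, insertEnv_lt h3]
  | arrow R R' ih ih' =>
    intro n S γ
    simp only [substTy, interp, ih, ih']
  | all R ih =>
    intro n S γ
    simp only [substTy, interp]
    funext t t'
    apply propext
    have key : ∀ s : Rel, interp (substTy R (n+1) (liftTy S 0)) (Env.cons s γ)
        = interp R (Env.cons s (insertEnv n (interp S γ) γ)) := by
      intro s
      rw [ih]
      have hl : interp (liftTy S 0) (Env.cons s γ) = interp S γ := by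
        rw [← insertEnv_zero s γ]; exact interp_lift S 0 s γ
      rw [hl, ← cons_insertEnv]
    constructor <;> intro h s hs <;> have := h s hs
    · rwa [key] at this
    · rwa [key]
  | conv R ih =>
    intro n S γ
    simp only [substTy, interp, ih]
  | comp R R' ih ih' =>
    intro n S γ
    simp only [substTy, interp, ih, ih']
  | prom t =>
    intro n S γ
    simp only [substTy, interp]

lemma envClosed_cons {r : Rel} {γ : Env} (hr : BetaEtaClosed r) (hγ : EnvClosed γ) :
    EnvClosed (Env.cons r γ) := by
  intro n; cases n with
  | zero => exact hr
  | succ m => exact hγ m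

lemma interp_closed (R : Ty) : ∀ (γ : Env), EnvClosed γ → BetaEtaClosed (interp R γ) := by
  induction R with
  | var k => intro γ hγ; exact hγ k
  | arrow R R' ih ih' =>
    intro γ hγ t₁ t₂ t₁' t₂' h h₁ h₂ a a' ha
    exact ih' γ hγ _ _ _ _ (h a a' ha) (Beq.appCongr h₁ (Beq.refl a)) (Beq.appCongr h₂ (Beq.refl a'))
  | all R ih =>
    intro γ hγ t₁ t₂ t₁' t₂' h h₁ h₂ r hr
    exact ih (Env.cons r γ) (envClosed_cons hr hγ) _ _ _ _ (h r hr) h₁ h₂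
  | conv R ih =>
    intro γ hγ t₁ t₂ t₁' t₂' h h₁ h₂
    exact ih γ hγ _ _ _ _ h h₂ h₁
  | comp R R' ih ih' =>
    intro γ hγ t₁ t₂ t₁' t₂' h h₁ h₂
    obtain ⟨u, hu, hv⟩ := h
    exact ⟨u, ih γ hγ _ _ _ _ hu h₁ (Beq.refl u), ih' γ hγ _ _ _ _ hv (Beq.refl u) h₂⟩
  | prom tm =>
    intro γ hγ t₁ t₂ t₁' t₂' h h₁ h₂
    exact Beq.trans (Beq.appCongr (Beq.refl tm) h₁) (Beq.trans h (Beq.symm h₂))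

/-- Select a relation based on polarity. -/
def Pol.sel : Pol → Rel → Rel → Rel
  | .pos, r, _ => r
  | .neg, _, r' => r'

lemma Pol.flip_sel (p : Pol) (r r' : Rel) : p.flip.sel r r' = p.sel r' r := by
  cases p <;> rfl

lemma interp_mono {p : Pol} {n : ℕ} {R : Ty} (h : OccPol p n R) :
    ∀ (γ : Env) (r r' : Rel), (∀ a b, r a b → r' a b) →
    ∀ t t', interp R (insertEnv n (p.sel r r') γ) t t' →
            interp R (insertEnv n (p.sel r' r) γ) t t' := by
  induction h with
  | varEq n =>
    intro γ r r' hrr' t t' ht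
    simp only [interp, insertEnv_self] at ht ⊢
    exact hrr' t t' ht
  | varNe p n m hne =>
    intro γ r r' hrr' t t' ht
    simp only [interp] at ht ⊢
    rcases Nat.lt_or_ge m n with h | h
    · rwa [insertEnv_lt h] at ht ⊢
    · have h2 : n < m := by omega
      rwa [insertEnv_gt h2] at ht ⊢
  | arrow h1 h2 ih1 ih2 =>
    intro γ r r' hrr' t t' ht a a' ha
    simp only [Pol.flip_sel] at ih1
    exact ih2 γ r r' hrr' _ _ (ht a a' (ih1 γ r r' hrr' a a' ha))
  | all h ih =>
    intro γ r r' hrr' t t' ht s hs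
    have := ih (Env.cons s γ) r r' hrr' t t'
    rw [← cons_insertEnv, ← cons_insertEnv] at this
    exact this (ht s hs)
  | conv h ih =>
    intro γ r r' hrr' t t' ht
    exact ih γ r r' hrr' t' t ht
  | comp h1 h2 ih1 ih2 =>
    intro γ r r' hrr' t t' ht
    obtain ⟨u, hu, hv⟩ := ht
    exact ⟨u, ih1 γ r r' hrr' t u hu, ih2 γ r r' hrr' u t' hv⟩
  | prom p n tm =>
    intro γ r r' hrr' t t' ht
    exact ht

/- βη facts -/
lemma beq_I_app (a : Term) : Beq (Term.app I a) a := Beq.beta (Term.var 0) a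

lemma subst_lift (t : Term) : ∀ (n : ℕ) (s : Term), Term.subst (Term.lift t n) n s = t := by
  induction t with
  | var k =>
    intro n s
    by_cases h : k < n
    · have h1 : k ≠ n := by omega
      have h2 : ¬ n < k := by omega
      simp [Term.lift, h, Term.subst, h1, h2]
    · have h1 : k+1 ≠ n := by omega
      have h2 : n < k+1 := by omega
      simp [Term.lift, h, Term.subst, h1, h2]
  | lam t ih =>
    intro n s
    simp [Term.lift, Term.subst, ih]
  | app t u ih ih' =>
    intro n s
    simp [Term.lift, Term.subst, ih, ih']

lemma beq_K_app (a b : Term) : Beq (Term.app (Term.app K a) b) a := by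
  have h1 : Beq (Term.app K a) (Term.lam (Term.lift a 0)) := by
    have := Beq.beta (Term.lam (Term.var 1)) a
    simpa [Term.subst, K] using this
  have h2 : Beq (Term.app (Term.lam (Term.lift a 0)) b) a := by
    have := Beq.beta (Term.lift a 0) b
    rwa [subst_lift] at this
  exact Beq.trans (Beq.appCongr h1 (Beq.refl b)) h2

lemma beq_KI (t : Term) : Beq (Term.app (Term.app K I) t) I := beq_K_app I t

/-- Characterization of the internalized subset type. -/
lemma sub_iff {R R' : Ty} {γ : Env} (hcl : BetaEtaClosed (interp R' γ)) (t t' : Term) :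
    interp (Ty.sub R R') γ t t' ↔ ∀ a b, interp R γ a b → interp R' γ a b := by
  constructor
  · rintro ⟨u, hu, v, harr, hv⟩ a b hab
    simp only [interp] at hu hv
    have hval := harr a b hab
    have hua : Beq a (Term.app u a) :=
      Beq.symm (Beq.trans (Beq.appCongr (Beq.trans (Beq.symm hu) (beq_KI t)) (Beq.refl a))
        (beq_I_app a))
    have hvb : Beq b (Term.app v b) :=
      Beq.symm (Beq.trans (Beq.appCongr (Beq.trans (Beq.symm hv) (beq_KI t')) (Beq.refl b))
        (beq_I_app b))
    exact hcl _ _ _ _ hval hua hvb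
  · intro hsub
    refine ⟨I, beq_KI t, I, ?_, beq_KI t'⟩
    intro a b hab
    exact hcl _ _ _ _ (hsub a b hab) (beq_I_app a) (beq_I_app b)

/-- Characterization of the implicit product type. -/
lemma imp_iff {R R' : Ty} {γ : Env} (hcl : BetaEtaClosed (interp R' γ)) (t t' : Term) :
    interp (Ty.imp R R') γ t t' ↔ ∀ a b, interp R γ a b → interp R' γ t t' := by
  constructor
  · rintro ⟨u, hu, v, harr, hv⟩ a b hab
    simp only [interp] at hu hv
    have hval := harr a b hab
    have hta : Beq t (Term.app u a) :=
      Beq.symm (Beq.trans (Beq.appCongr (Beq.symm hu) (Beq.refl a)) (beq_K_app t a))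
    have htb : Beq t' (Term.app v b) :=
      Beq.symm (Beq.trans (Beq.appCongr (Beq.symm hv) (Beq.refl b)) (beq_K_app t' b))
    exact hcl _ _ _ _ hval hta htb
  · intro hsub
    refine ⟨Term.app K t, Beq.refl _, Term.app K t', ?_, Beq.refl _⟩
    intro a b hab
    exact hcl _ _ _ _ (hsub a b hab) (beq_K_app t a) (beq_K_app t' b)

/-- Characterization of the recursive type. -/
lemma rec_iff {R : Ty} {γ : Env} (hγ : EnvClosed γ) (t t' : Term) :
    interp (recTy R) γ t t' ↔
    ∀ r : Rel, BetaEtaClosed r → (∀ a b, interp R (Env.cons r γ) a b → r a b) → r t t' := by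
  have hvar : ∀ r : Rel, interp (Ty.var 0) (Env.cons r γ) = r := fun r => rfl
  constructor
  · intro h r hr hsub
    have h1 := h r hr
    have hcl : BetaEtaClosed (interp (Ty.var 0) (Env.cons r γ)) := hr
    have h2 := (imp_iff hcl t t').mp h1
    refine h2 I I ?_
    rw [sub_iff hcl I I]
    intro a b hab
    exact hsub a b hab
  · intro h r hr
    have hcl : BetaEtaClosed (interp (Ty.var 0) (Env.cons r γ)) := hr
    rw [imp_iff hcl t t']
    intro a b hab
    rw [sub_iff hcl a b] at hab
    exact h r hr hab


/-- Rec unfold: if X ∈⁺ R then ⟦Rec X. R⟧_γ ⊆ ⟦[Rec X. R / X]R⟧_γ, and combined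
with the fold direction, ⟦Rec X. R⟧_γ = ⟦[Rec X. R / X]R⟧_γ. -/
theorem rec_unfold (R : Ty) (hR : OccPol .pos 0 R) (γ : Env) (hγ : EnvClosed γ) :
    (∀ t t', interp (recTy R) γ t t' → interp (substTy R 0 (recTy R)) γ t t') ∧
    interp (recTy R) γ = interp (substTy R 0 (recTy R)) γ := by
  have hμcl : BetaEtaClosed (interp (recTy R) γ) := interp_closed _ γ hγ
  have hγμ : EnvClosed (Env.cons (interp (recTy R) γ) γ) := envClosed_cons hμcl hγ
  have hsubst : interp (substTy R 0 (recTy R)) γ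
      = interp R (Env.cons (interp (recTy R) γ) γ) := by
    rw [interp_subst, insertEnv_zero]
  have hfold : ∀ t t', interp R (Env.cons (interp (recTy R) γ) γ) t t' →
      interp (recTy R) γ t t' := by
    intro t t' h
    rw [rec_iff hγ]
    intro r hr hsub
    apply hsub
    have hμr : ∀ a b, interp (recTy R) γ a b → r a b := fun a b hab =>
      (rec_iff hγ a b).mp hab r hr hsub
    have hm := interp_mono hR γ (interp (recTy R) γ) r hμr t t'
    simp only [Pol.sel] at hm
    rw [insertEnv_zero, insertEnv_zero] at hm
    exact hm h
  have hunf : ∀ t t', interp (recTy R) γ t t' →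
      interp R (Env.cons (interp (recTy R) γ) γ) t t' := by
    intro t t' h
    have hrcl : BetaEtaClosed (interp R (Env.cons (interp (recTy R) γ) γ)) :=
      interp_closed _ _ hγμ
    have hsub : ∀ a b,
        interp R (Env.cons (interp R (Env.cons (interp (recTy R) γ) γ)) γ) a b →
        interp R (Env.cons (interp (recTy R) γ) γ) a b := by
      intro a b hab
      have hm := interp_mono hR γ (interp R (Env.cons (interp (recTy R) γ) γ))
        (interp (recTy R) γ) hfold a b
      simp only [Pol.sel] at hm
      rw [insertEnv_zero, insertEnv_zero] at hm
      exact hm hab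
    exact (rec_iff hγ t t').mp h _ hrcl hsub
  refine ⟨fun t t' h => by rw [hsubst]; exact hunf t t' h, ?_⟩
  rw [hsubst]
  funext t t'
  exact propext ⟨hunf t t', hfold t t'⟩

end RelTT
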